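/- For a definite nonnegative matrix A, the subeigencone V*(A) = {x : A⊗x ≤ x} equals the max-algebraic column span of the Kleene star A*, i.e., the set of vectors of the form max_i λ_i · (A*)_{·i} with λ_i ≥ 0. -/

import Mathlib

open Finset

/-- Max-times matrix product: `(A ⊗ B) i j = max_k (A i k * B k j)`. -/
noncomputable def mProd {n : ℕ} (A B : Matrix (Fin n) (Fin n) NNReal) :
    Matrix (Fin n) (Fin n) NNReal :=
  fun i j => univ.sup fun k => A i k * B k j

/-- Max-algebraic matrix powers, `mPow A 0 = I`. -/
noncomputable def mPow {n : ℕ} (A : Matrix (Fin n) (Fin n) NNReal) :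
    ℕ → Matrix (Fin n) (Fin n) NNReal
  | 0 => fun i j => if i = j then 1 else 0
  | k + 1 => mProd (mPow A k) A

/-- Kleene star `A* = I ⊕ A ⊕ ... ⊕ A^{n-1}` in max algebra. -/
noncomputable def klStar {n : ℕ} (A : Matrix (Fin n) (Fin n) NNReal) :
    Matrix (Fin n) (Fin n) NNReal :=
  fun i j => (Finset.range n).sup fun k => mPow A k i j

/-- Partial "sums" `I ⊕ A ⊕ ... ⊕ A^m` of the Kleene star series. -/
noncomputable def kPartial {n : ℕ} (A : Matrix (Fin n) (Fin n) NNReal) (m : ℕ) :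
    Matrix (Fin n) (Fin n) NNReal :=
  fun i j => (Finset.range (m + 1)).sup fun k => mPow A k i j

/-- The weight of the cycle given by the list `l` (with wrap-around edge). -/
def cycleWeight {n : ℕ} (A : Matrix (Fin n) (Fin n) NNReal) (l : List (Fin n)) : NNReal :=
  ((l.zip (l.rotate 1)).map fun p => A p.1 p.2).prod

/-- The geometric mean of a cycle: `w(σ,A)^{1/k}`. -/
noncomputable def cycleMean {n : ℕ} (A : Matrix (Fin n) (Fin n) NNReal) (l : List (Fin n)) :
    NNReal :=
  (cycleWeight A l) ^ ((l.length : ℝ)⁻¹)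

/-- The maximum cycle geometric mean `λ(A)`. -/
noncomputable def maxCycleMean {n : ℕ} (A : Matrix (Fin n) (Fin n) NNReal) : NNReal :=
  sSup {x | ∃ l : List (Fin n), l ≠ [] ∧ x = cycleMean A l}

/-- `(i,j)` is a critical edge: it lies on a cycle attaining `λ(A)`. -/
def criticalEdge {n : ℕ} (A : Matrix (Fin n) (Fin n) NNReal) (i j : Fin n) : Prop :=
  ∃ l : List (Fin n), l ≠ [] ∧ cycleMean A l = maxCycleMean A ∧ (i, j) ∈ l.zip (l.rotate 1)

/-- Max-algebraic matrix-vector product. -/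
noncomputable def mVec {n : ℕ} (A : Matrix (Fin n) (Fin n) NNReal) (x : Fin n → NNReal) :
    Fin n → NNReal :=
  fun i => univ.sup fun j => A i j * x j

section Aux
variable {n : ℕ} (A : Matrix (Fin n) (Fin n) NNReal)

lemma mProd_assoc (B C : Matrix (Fin n) (Fin n) NNReal) :
    mProd (mProd A B) C = mProd A (mProd B C) := by
  funext i j
  simp only [mProd, NNReal.finset_sup_mul, NNReal.mul_finset_sup]
  rw [Finset.sup_comm]
  simp [mul_assoc]

lemma mProd_id_left (B : Matrix (Fin n) (Fin n) NNReal) : mProd (mPow A 0) B = B := by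
  funext i j
  refine le_antisymm (Finset.sup_le fun k _ => ?_) ?_
  · by_cases h : i = k <;> simp [mPow, mProd, h]
  · have h := Finset.le_sup (f := fun k => mPow A 0 i k * B k j) (Finset.mem_univ i)
    simpa [mProd, mPow] using h

lemma mProd_id_right (B : Matrix (Fin n) (Fin n) NNReal) : mProd B (mPow A 0) = B := by
  funext i j
  refine le_antisymm (Finset.sup_le fun k _ => ?_) ?_
  · by_cases h : k = j <;> simp [mPow, mProd, h]
  · have h := Finset.le_sup (f := fun k => B i k * mPow A 0 k j) (Finset.mem_univ j)
    simpa [mProd, mPow] using h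

lemma mPow_succ_left (k : ℕ) : mPow A (k + 1) = mProd A (mPow A k) := by
  induction k with
  | zero => show mProd (mPow A 0) A = mProd A (mPow A 0); rw [mProd_id_left, mProd_id_right]
  | succ k ih =>
      calc mPow A (k+2) = mProd (mPow A (k+1)) A := rfl
        _ = mProd (mProd A (mPow A k)) A := by rw [ih]
        _ = mProd A (mProd (mPow A k) A) := mProd_assoc A _ _
        _ = mProd A (mPow A (k+1)) := rfl

/-- weight of path starting at `i` and then visiting `l` in order -/
def pw : Fin n → List (Fin n) → NNReal
  | _, [] => 1
  | i, j :: l => A i j * pw j l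

/-- endpoint of path -/
def pend : Fin n → List (Fin n) → Fin n
  | i, [] => i
  | _, j :: l => pend j l

lemma pend_append (i x : Fin n) (s u : List (Fin n)) :
    pend (n := n) i (s ++ x :: u) = pend x u := by
  induction s generalizing i with
  | nil => rfl
  | cons b s ih => exact ih b

lemma pw_append (i x : Fin n) (s q : List (Fin n)) :
    pw A i (s ++ x :: q) = pw A i (s ++ [x]) * pw A x q := by
  induction s generalizing i with
  | nil => simp [pw, mul_assoc]
  | cons b s ih => simp [pw, ih b, mul_assoc]

lemma pw_concat (i j : Fin n) (l : List (Fin n)) :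
    pw A i (l ++ [j]) = pw A i l * A (pend i l) j := by
  induction l generalizing i with
  | nil => simp [pw, pend, mul_comm]
  | cons b l ih => simp [pw, pend, ih b, mul_assoc]

lemma zip_prod_eq_pw (t : List (Fin n)) : ∀ a c : Fin n,
    (((a :: t).zip (t ++ [c])).map fun p => A p.1 p.2).prod = pw A a (t ++ [c]) := by
  induction t with
  | nil => intro a c; simp [pw]
  | cons b t ih => intro a c; simp only [List.cons_append, List.zip_cons_cons, List.map_cons,
      List.prod_cons, pw, ih b c]

lemma cycleWeight_eq_pw (x : Fin n) (t : List (Fin n)) :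
    cycleWeight A (x :: t) = pw A x (t ++ [x]) := by
  have hrot : (x :: t).rotate 1 = t ++ [x] := by
    simpa using List.rotate_cons_succ t x 0
  rw [cycleWeight, hrot, zip_prod_eq_pw]

lemma pw_le_mPow (i : Fin n) (l : List (Fin n)) :
    pw A i l ≤ mPow A l.length i (pend i l) := by
  induction l generalizing i with
  | nil => simp [pw, pend, mPow]
  | cons j l ih =>
      show A i j * pw A j l ≤ mPow A (l.length + 1) i (pend j l)
      rw [mPow_succ_left]
      calc A i j * pw A j l ≤ A i j * mPow A l.length j (pend j l) := by
            exact mul_le_mul_right (ih j) _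
        _ ≤ _ := Finset.le_sup (f := fun k => A i k * mPow A l.length k (pend j l))
            (Finset.mem_univ j)

lemma exists_path (m : ℕ) (i j : Fin n) :
    mPow A m i j = 0 ∨
      ∃ l : List (Fin n), l.length = m ∧ pend i l = j ∧ mPow A m i j ≤ pw A i l := by
  induction m generalizing j with
  | zero =>
      by_cases h : i = j
      · subst h; right; exact ⟨[], rfl, rfl, by simp [mPow, pw]⟩
      · left; simp [mPow, h]
  | succ m ih =>
      by_cases h0 : mPow A (m+1) i j = 0
      · exact Or.inl h0
      right
      have hne : (univ : Finset (Fin n)).Nonempty := ⟨i, Finset.mem_univ i⟩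
      obtain ⟨k, -, hk⟩ := Finset.exists_mem_eq_sup univ hne
        (fun k => mPow A m i k * A k j)
      have hval : mPow A (m+1) i j = mPow A m i k * A k j := hk
      have hkm : mPow A m i k ≠ 0 := by
        intro hz; rw [hval, hz, zero_mul] at h0; exact h0 rfl
      rcases ih k with h | ⟨l, hlen, hpend, hle⟩
      · exact absurd h hkm
      refine ⟨l ++ [j], by simp [hlen], ?_, ?_⟩
      · have := pend_append (n := n) i j l []
        simpa [pend] using this
      · rw [pw_concat, hpend, hval]
        exact mul_le_mul_left hle _

end Aux

section Def
variable {n : ℕ} (A : Matrix (Fin n) (Fin n) NNReal)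

lemma sublist_decomp {α : Type*} {x : α} :
    ∀ {v : List α}, List.Sublist [x, x] v → ∃ s t u, v = s ++ x :: (t ++ x :: u) := by
  intro v h
  induction v with
  | nil => exact absurd h (by simp)
  | cons a v ih =>
      cases h with
      | cons _ h' => obtain ⟨s, t, u, rfl⟩ := ih h'; exact ⟨a :: s, t, u, rfl⟩
      | cons_cons _ h' =>
          obtain ⟨t, u, rfl⟩ := List.append_of_mem (List.singleton_sublist.mp h')
          exact ⟨[], t, u, rfl⟩

lemma cycleMean_le_max {l : List (Fin n)} (hl : l ≠ []) :
    cycleMean A l ≤ maxCycleMean A := by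
  set M : NNReal := (univ.sup fun p : Fin n × Fin n => A p.1 p.2) ⊔ 1 with hM
  have hbdd : BddAbove {x | ∃ l : List (Fin n), l ≠ [] ∧ x = cycleMean A l} := by
    refine ⟨M, ?_⟩
    rintro y ⟨l', hl', rfl⟩
    have hk : l'.length ≠ 0 := by simpa using hl'
    have hw : cycleWeight A l' ≤ M ^ l'.length := by
      have hlen : ((l'.zip (l'.rotate 1)).map fun p => A p.1 p.2).length = l'.length := by
        simp
      calc cycleWeight A l' ≤ M ^ ((l'.zip (l'.rotate 1)).map fun p => A p.1 p.2).length := by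
            apply List.prod_le_pow_card
            intro a ha
            obtain ⟨p, hp, rfl⟩ := List.mem_map.mp ha
            exact le_trans (Finset.le_sup (f := fun p : Fin n × Fin n => A p.1 p.2)
              (Finset.mem_univ p)) le_sup_left
        _ = M ^ l'.length := by rw [hlen]
    calc cycleMean A l' = cycleWeight A l' ^ ((l'.length : ℝ)⁻¹) := rfl
      _ ≤ (M ^ l'.length) ^ ((l'.length : ℝ)⁻¹) :=
          NNReal.rpow_le_rpow hw (by positivity)
      _ = M := by
          rw [← NNReal.rpow_natCast M l'.length, ← NNReal.rpow_mul,
            mul_inv_cancel₀ (by exact_mod_cast hk), NNReal.rpow_one]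
  exact le_csSup hbdd ⟨l, hl, rfl⟩

lemma cycleWeight_le_one (hdef : maxCycleMean A = 1) {l : List (Fin n)} (hl : l ≠ []) :
    cycleWeight A l ≤ 1 := by
  have hm : cycleMean A l ≤ 1 := hdef ▸ cycleMean_le_max A hl
  have hk : (l.length : ℝ) ≠ 0 := by simpa using hl
  have : cycleWeight A l = (cycleMean A l) ^ l.length := by
    rw [cycleMean, ← NNReal.rpow_natCast (_ ^ _) l.length, ← NNReal.rpow_mul,
      inv_mul_cancel₀ hk, NNReal.rpow_one]
  rw [this]
  exact pow_le_one' hm _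

lemma star_path (hdef : maxCycleMean A = 1) :
    ∀ (m : ℕ) (l : List (Fin n)) (i : Fin n), l.length = m →
      pw A i l ≤ klStar A i (pend i l) := by
  intro m
  induction m using Nat.strong_induction_on with
  | _ m ih =>
    intro l i hlen
    by_cases hm : m < n
    · refine le_trans (pw_le_mPow A i l) ?_
      rw [hlen]
      exact Finset.le_sup (f := fun k => mPow A k i (pend i l)) (Finset.mem_range.mpr hm)
    · have hnd : ¬ (i :: l).Nodup := by
        intro hnd
        have h1 := hnd.length_le_card
        simp only [List.length_cons, Fintype.card_fin, hlen] at h1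
        omega
      obtain ⟨x, hx⟩ := List.exists_duplicate_iff_not_nodup.mpr hnd
      obtain ⟨s, t, u, hdec⟩ := sublist_decomp (List.duplicate_iff_sublist.mp hx)
      have hcyc : cycleWeight A (x :: t) ≤ 1 := cycleWeight_le_one A hdef (by simp)
      cases s with
      | nil =>
          obtain ⟨rfl, rfl⟩ : i = x ∧ l = t ++ x :: u := by
            simpa using hdec
          have hlt : u.length < m := by simp at hlen; omega
          calc pw A i (t ++ i :: u) = pw A i (t ++ [i]) * pw A i u := pw_append A i i t u
            _ = cycleWeight A (i :: t) * pw A i u := by rw [cycleWeight_eq_pw]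
            _ ≤ 1 * pw A i u := mul_le_mul_left hcyc _
            _ = pw A i u := one_mul _
            _ ≤ klStar A i (pend i u) := ih u.length hlt u i rfl
            _ = klStar A i (pend i (t ++ i :: u)) := by rw [pend_append]
      | cons a s =>
          obtain ⟨rfl, rfl⟩ : i = a ∧ l = s ++ x :: (t ++ x :: u) := by
            simpa using hdec
          have hlt : (s ++ x :: u).length < m := by simp at hlen ⊢; omega
          calc pw A i (s ++ x :: (t ++ x :: u))
              = pw A i (s ++ [x]) * pw A x (t ++ x :: u) := pw_append A i x s _
            _ = pw A i (s ++ [x]) * (pw A x (t ++ [x]) * pw A x u) := by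
                rw [pw_append A x x t u]
            _ = pw A i (s ++ [x]) * (cycleWeight A (x :: t) * pw A x u) := by
                rw [cycleWeight_eq_pw]
            _ ≤ pw A i (s ++ [x]) * (1 * pw A x u) := by
                exact mul_le_mul_right (mul_le_mul_left hcyc _) _
            _ = pw A i (s ++ [x]) * pw A x u := by rw [one_mul]
            _ = pw A i (s ++ x :: u) := (pw_append A i x s u).symm
            _ ≤ klStar A i (pend i (s ++ x :: u)) := ih _ hlt _ i rfl
            _ = klStar A i (pend i (s ++ x :: (t ++ x :: u))) := by
                rw [pend_append, pend_append, pend_append]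

lemma mPow_le_klStar (hdef : maxCycleMean A = 1) (m : ℕ) (i j : Fin n) :
    mPow A m i j ≤ klStar A i j := by
  rcases exists_path A m i j with h | ⟨l, hlen, hpend, hle⟩
  · simp [h]
  · exact le_trans hle (hpend ▸ star_path A hdef l.length l i rfl)

lemma absorb (hdef : maxCycleMean A = 1) (i j k : Fin n) :
    A i j * klStar A j k ≤ klStar A i k := by
  rw [klStar, NNReal.mul_finset_sup]
  apply Finset.sup_le
  intro m _
  have h1 : A i j * mPow A m j k ≤ mPow A (m + 1) i k := by
    rw [mPow_succ_left]
    exact Finset.le_sup (f := fun j => A i j * mPow A m j k) (Finset.mem_univ j)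
  exact le_trans h1 (mPow_le_klStar A hdef (m + 1) i k)

lemma subeig (x : Fin n → NNReal) (hx : ∀ i, mVec A x i ≤ x i) (m : ℕ) (i : Fin n) :
    (univ.sup fun j => mPow A m i j * x j) ≤ x i := by
  induction m generalizing i with
  | zero =>
      apply Finset.sup_le
      intro j _
      by_cases h : i = j
      · subst h; simp [mPow]
      · simp [mPow, h]
  | succ m ihm =>
      apply Finset.sup_le
      intro j _
      rw [mPow_succ_left, mProd, NNReal.finset_sup_mul]
      apply Finset.sup_le
      intro k _
      calc A i k * mPow A m k j * x j = A i k * (mPow A m k j * x j) := mul_assoc _ _ _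
        _ ≤ A i k * x k := mul_le_mul_right
            (le_trans (Finset.le_sup (f := fun j => mPow A m k j * x j)
              (Finset.mem_univ j)) (ihm k)) _
        _ ≤ mVec A x i := Finset.le_sup (f := fun k => A i k * x k) (Finset.mem_univ k)
        _ ≤ x i := hx i

end Def

/-- for definite `A`, the subeigencone `V*(A)` equals the
max-algebraic column span of `A*`. -/
theorem stmt_4 {n : ℕ} (A : Matrix (Fin n) (Fin n) NNReal)
    (hdef : maxCycleMean A = 1) :
    {x : Fin n → NNReal | ∀ i, mVec A x i ≤ x i} =
      {x : Fin n → NNReal | ∃ c : Fin n → NNReal,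
        ∀ i, x i = univ.sup fun k => c k * klStar A i k} := by
  ext x
  simp only [Set.mem_setOf_eq]
  constructor
  · intro hx
    refine ⟨x, fun i => le_antisymm ?_ ?_⟩
    · have h1 : (1 : NNReal) ≤ klStar A i i := by
        calc (1 : NNReal) = mPow A 0 i i := by simp [mPow]
          _ ≤ klStar A i i := Finset.le_sup (f := fun k => mPow A k i i)
              (Finset.mem_range.mpr i.pos)
      calc x i = x i * 1 := (mul_one _).symm
        _ ≤ x i * klStar A i i := mul_le_mul_right h1 _
        _ ≤ _ := Finset.le_sup (f := fun k => x k * klStar A i k) (Finset.mem_univ i)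
    · apply Finset.sup_le
      intro k _
      rw [klStar, NNReal.mul_finset_sup]
      apply Finset.sup_le
      intro m _
      calc x k * mPow A m i k = mPow A m i k * x k := mul_comm _ _
        _ ≤ univ.sup (fun j => mPow A m i j * x j) :=
            Finset.le_sup (f := fun j => mPow A m i j * x j) (Finset.mem_univ k)
        _ ≤ x i := subeig A x hx m i
  · rintro ⟨c, hc⟩ i
    rw [mVec, hc i]
    apply Finset.sup_le
    intro j _
    rw [hc j, NNReal.mul_finset_sup]
    apply Finset.sup_le
    intro k _
    calc A i j * (c k * klStar A j k) = c k * (A i j * klStar A j k) := by ring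
      _ ≤ c k * klStar A i k := mul_le_mul_right (absorb A hdef i j k) _
      _ ≤ _ := Finset.le_sup (f := fun k => c k * klStar A i k) (Finset.mem_univ k)
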